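/- Let l be a real number and u = l + π. Then the convex hull (over ℝ) of D[l,u] equals the closed half-plane {(w,v) ∈ ℝ² : sin(l)·w − cos(l)·v ≤ 0}. -/

import Mathlib

/-- The arc-cone set `D[l,u] = {(r cos θ, r sin θ) : r ≥ 1, l ≤ θ ≤ u}`. -/
def Darc (l u : ℝ) : Set (ℝ × ℝ) :=
  {p | ∃ r θ : ℝ, 1 ≤ r ∧ l ≤ θ ∧ θ ≤ u ∧ p = (r * Real.cos θ, r * Real.sin θ)}

/-- The polyhedron `P[l,u]` given by the two angular cuts and the chord cut. -/
def Parc (l u : ℝ) : Set (ℝ × ℝ) :=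
  {p | Real.sin l * p.1 - Real.cos l * p.2 ≤ 0 ∧
       Real.sin u * p.1 - Real.cos u * p.2 ≥ 0 ∧
       ((Real.cos l + Real.cos u) / 2) * p.1 + ((Real.sin l + Real.sin u) / 2) * p.2 ≥
         ((Real.cos l + Real.cos u) / 2) ^ 2 + ((Real.sin l + Real.sin u) / 2) ^ 2}

lemma mem_Darc (l : ℝ) (q : ℝ × ℝ) (hy : Real.sin l * q.1 - Real.cos l * q.2 ≤ 0)
    (hr : 1 ≤ q.1 ^ 2 + q.2 ^ 2) : q ∈ Darc l (l + Real.pi) := by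
  set r := Real.sqrt (q.1 ^ 2 + q.2 ^ 2) with hrdef
  have hr1 : 1 ≤ r := by
    rw [show (1:ℝ) = Real.sqrt 1 by simp]
    exact Real.sqrt_le_sqrt hr
  have hrpos : 0 < r := lt_of_lt_of_le one_pos hr1
  have hr2 : r ^ 2 = q.1 ^ 2 + q.2 ^ 2 := Real.sq_sqrt (by positivity)
  clear_value r
  set c := q.1 / r with hc
  set s := q.2 / r with hs
  clear_value c s
  have hq1 : q.1 = r * c := by rw [hc, mul_div_assoc', mul_div_cancel_left₀ _ hrpos.ne']
  have hq2 : q.2 = r * s := by rw [hs, mul_div_assoc', mul_div_cancel_left₀ _ hrpos.ne']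
  have hcs : c ^ 2 + s ^ 2 = 1 := by
    have h : r ^ 2 * (c ^ 2 + s ^ 2) = r ^ 2 * 1 := by
      rw [hq1, hq2] at hr2; linear_combination -hr2
    exact mul_left_cancel₀ (by positivity) h
  have hpyl := Real.sin_sq_add_cos_sq l
  have hy' : 0 ≤ Real.cos l * s - Real.sin l * c := by
    have h0 : 0 ≤ (Real.cos l * q.2 - Real.sin l * q.1) / r :=
      div_nonneg (by linarith) hrpos.le
    have : (Real.cos l * q.2 - Real.sin l * q.1) / r = Real.cos l * s - Real.sin l * c := by
      rw [hq1, hq2]; field_simp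
    linarith [this ▸ h0]
  have hid : 1 - (Real.cos l * c + Real.sin l * s) ^ 2 = (Real.cos l * s - Real.sin l * c) ^ 2 := by
    linear_combination (-(c^2+s^2)) * hpyl - hcs
  have ht2 : (Real.cos l * c + Real.sin l * s) ^ 2 ≤ 1 := by
    nlinarith [sq_nonneg (Real.cos l * s - Real.sin l * c)]
  set t := Real.cos l * c + Real.sin l * s with ht
  refine ⟨r, l + Real.arccos t, hr1, by linarith [Real.arccos_nonneg t],
    by linarith [Real.arccos_le_pi t], ?_⟩
  have hsin : Real.sin (Real.arccos t) = Real.cos l * s - Real.sin l * c := by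
    rw [Real.sin_arccos, ht, hid, Real.sqrt_sq hy']
  have hcos : Real.cos (Real.arccos t) = t := Real.cos_arccos (by nlinarith) (by nlinarith)
  have h1 : Real.cos (l + Real.arccos t) = c := by
    rw [Real.cos_add, hcos, hsin, ht]; linear_combination c * hpyl
  have h2 : Real.sin (l + Real.arccos t) = s := by
    rw [Real.sin_add, hcos, hsin, ht]; linear_combination s * hpyl
  rw [h1, h2, ← hq1, ← hq2]

theorem stmt_15 (l : ℝ) :
    convexHull ℝ (Darc l (l + Real.pi)) =
      {p : ℝ × ℝ | Real.sin l * p.1 - Real.cos l * p.2 ≤ 0} := by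
  apply le_antisymm
  · apply convexHull_min
    · rintro p ⟨r, θ, hrr, hθl, hθu, rfl⟩
      simp only [Set.mem_setOf_eq]
      have hsin : 0 ≤ Real.sin (θ - l) :=
        Real.sin_nonneg_of_nonneg_of_le_pi (by linarith) (by linarith)
      have h : Real.sin l * (r * Real.cos θ) - Real.cos l * (r * Real.sin θ)
          = -(r * Real.sin (θ - l)) := by rw [Real.sin_sub]; ring
      rw [h]
      nlinarith
    · intro x hx y hy a b ha hb hab
      simp only [Set.mem_setOf_eq] at hx hy ⊢
      simp only [Prod.fst_add, Prod.snd_add, Prod.smul_fst, Prod.smul_snd, smul_eq_mul]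
      nlinarith
  · intro p hp
    simp only [Set.mem_setOf_eq] at hp
    obtain ⟨x, hx⟩ : ∃ x, x = Real.cos l * p.1 + Real.sin l * p.2 := ⟨_, rfl⟩
    obtain ⟨T, hT⟩ : ∃ T, T = |x| + 1 := ⟨_, rfl⟩
    have hTx : 1 ≤ x + T := by
      have := neg_abs_le x; rw [hT]; linarith
    have hTx' : x - T ≤ -1 := by
      have := le_abs_self x; rw [hT]; linarith
    have hpyl := Real.sin_sq_add_cos_sq l
    set e : ℝ × ℝ := (Real.cos l, Real.sin l) with he
    have ha : p + T • e ∈ Darc l (l + Real.pi) := by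
      apply mem_Darc
      · simp only [he, Prod.fst_add, Prod.snd_add, Prod.smul_fst, Prod.smul_snd, smul_eq_mul]
        nlinarith
      · simp only [he, Prod.fst_add, Prod.snd_add, Prod.smul_fst, Prod.smul_snd, smul_eq_mul]
        have key : (p.1 + T * Real.cos l) ^ 2 + (p.2 + T * Real.sin l) ^ 2
            = (x + T) ^ 2 + (Real.cos l * p.2 - Real.sin l * p.1) ^ 2 := by
          rw [hx]; linear_combination (T^2 - p.1^2 - p.2^2) * hpyl
        rw [key]
        nlinarith [sq_nonneg (Real.cos l * p.2 - Real.sin l * p.1)]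
    have hb : p - T • e ∈ Darc l (l + Real.pi) := by
      apply mem_Darc
      · simp only [he, Prod.fst_sub, Prod.snd_sub, Prod.smul_fst, Prod.smul_snd, smul_eq_mul]
        nlinarith
      · simp only [he, Prod.fst_sub, Prod.snd_sub, Prod.smul_fst, Prod.smul_snd, smul_eq_mul]
        have key : (p.1 - T * Real.cos l) ^ 2 + (p.2 - T * Real.sin l) ^ 2
            = (x - T) ^ 2 + (Real.cos l * p.2 - Real.sin l * p.1) ^ 2 := by
          rw [hx]; linear_combination (T^2 - p.1^2 - p.2^2) * hpyl
        rw [key]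
        nlinarith [sq_nonneg (Real.cos l * p.2 - Real.sin l * p.1)]
    have hmid : p = (1/2 : ℝ) • (p + T • e) + (1/2 : ℝ) • (p - T • e) := by
      module
    rw [hmid]
    exact (convex_convexHull ℝ _) (subset_convexHull ℝ _ ha) (subset_convexHull ℝ _ hb)
      (by norm_num) (by norm_num) (by norm_num)
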